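/- arXiv:1002.4159 — 3 statements merged into one kernel-verified Lean document; each statement's English description precedes it below -/
import Mathlib

section
/- The map x ↦ (‖x‖_∞/‖x‖₂)·x (extended by 0 at 0) is bi-Lipschitz on ℝ^d: there exist constants 0 < c ≤ C with c‖x-y‖₂ ≤ ‖h(x)-h(y)‖₂ ≤ C‖x-y‖₂ for all x,y ∈ ℝ^d. -/
/-- The sup norm of a point of Euclidean space. -/
noncomputable def supNorm {d : ℕ} (x : EuclideanSpace ℝ (Fin d)) : ℝ :=
  ‖(WithLp.equiv 2 (Fin d → ℝ)) x‖

section Aux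

variable {d : ℕ}

lemma supNorm_nonneg (x : EuclideanSpace ℝ (Fin d)) : 0 ≤ supNorm x := norm_nonneg _

lemma supNorm_smul (c : ℝ) (x : EuclideanSpace ℝ (Fin d)) :
    supNorm (c • x) = |c| * supNorm x := by
  simp [supNorm, norm_smul]

lemma supNorm_eq_zero {x : EuclideanSpace ℝ (Fin d)} : supNorm x = 0 ↔ x = 0 := by
  rw [supNorm, norm_eq_zero]
  constructor
  · intro hx
    exact (WithLp.equiv 2 (Fin d → ℝ)).injective (by simpa using hx)
  · rintro rfl; simp

lemma supNorm_pos {x : EuclideanSpace ℝ (Fin d)} (hx : x ≠ 0) : 0 < supNorm x :=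
  (supNorm_nonneg x).lt_of_ne fun e => hx (supNorm_eq_zero.1 e.symm)

lemma supNorm_sub_lip (x y : EuclideanSpace ℝ (Fin d)) :
    |supNorm x - supNorm y| ≤ supNorm (x - y) := by
  rw [supNorm, supNorm, supNorm, WithLp.equiv_apply, WithLp.equiv_apply, WithLp.equiv_apply, WithLp.ofLp_sub]
  exact abs_norm_sub_norm_le _ _

lemma coord_le_norm (x : EuclideanSpace ℝ (Fin d)) (i : Fin d) : |x i| ≤ ‖x‖ := by
  rw [EuclideanSpace.norm_eq]
  have : |x i| = Real.sqrt (‖x i‖ ^ 2) := by rw [Real.sqrt_sq_eq_abs]; simp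
  rw [this]
  exact Real.sqrt_le_sqrt <|
    Finset.single_le_sum (f := fun j => ‖x j‖ ^ 2) (fun j _ => by positivity)
      (Finset.mem_univ i)

lemma supNorm_le_norm (x : EuclideanSpace ℝ (Fin d)) : supNorm x ≤ ‖x‖ := by
  rw [supNorm]
  refine (pi_norm_le_iff_of_nonneg (norm_nonneg x)).2 fun i => ?_
  simpa using coord_le_norm x i

lemma norm_le_sqrt_supNorm (x : EuclideanSpace ℝ (Fin d)) :
    ‖x‖ ≤ Real.sqrt d * supNorm x := by
  rw [EuclideanSpace.norm_eq]
  have h1 : ∀ i, ‖x i‖ ≤ supNorm x := fun i =>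
    norm_le_pi_norm ((WithLp.equiv 2 (Fin d → ℝ)) x) i
  have hsum : ∑ i, ‖x i‖ ^ 2 ≤ (d : ℝ) * (supNorm x) ^ 2 := by
    calc ∑ i, ‖x i‖ ^ 2 ≤ ∑ _i : Fin d, (supNorm x) ^ 2 :=
          Finset.sum_le_sum fun i _ => pow_le_pow_left₀ (norm_nonneg _) (h1 i) 2
      _ = (d : ℝ) * (supNorm x) ^ 2 := by simp [mul_comm]
  calc Real.sqrt (∑ i, ‖x i‖ ^ 2) ≤ Real.sqrt ((d : ℝ) * (supNorm x) ^ 2) :=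
        Real.sqrt_le_sqrt hsum
    _ = Real.sqrt d * supNorm x := by
        rw [Real.sqrt_mul (by positivity), Real.sqrt_sq (supNorm_nonneg x)]

lemma aux_lip {E : Type*} [NormedAddCommGroup E] [NormedSpace ℝ E]
    (N₁ N₂ : E → ℝ) (a₁ a₂ b : ℝ) (hb : 0 < b) (ha₁ : 0 ≤ a₁) (ha₂ : 0 ≤ a₂)
    (h₁lip : ∀ x y, |N₁ x - N₁ y| ≤ a₁ * ‖x - y‖)
    (h₁ub : ∀ x, N₁ x ≤ a₁ * ‖x‖) (h₁nn : ∀ x, 0 ≤ N₁ x)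
    (h₂lip : ∀ x y, |N₂ x - N₂ y| ≤ a₂ * ‖x - y‖)
    (h₂lb : ∀ x, b * ‖x‖ ≤ N₂ x)
    (x y : E) (hx : x ≠ 0) (hy : y ≠ 0) :
    ‖(N₁ x / N₂ x) • x - (N₁ y / N₂ y) • y‖ ≤ (a₁ * (2 * b + a₂) / b ^ 2) * ‖x - y‖ := by
  have hxn : 0 < ‖x‖ := norm_pos_iff.2 hx
  have hyn : 0 < ‖y‖ := norm_pos_iff.2 hy
  have hBx : 0 < N₂ x := lt_of_lt_of_le (by positivity) (h₂lb x)
  have hBy : 0 < N₂ y := lt_of_lt_of_le (by positivity) (h₂lb y)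
  have hw : (0:ℝ) ≤ ‖x - y‖ := norm_nonneg _
  have key : (N₁ x / N₂ x) • x - (N₁ y / N₂ y) • y
      = (N₁ x / N₂ x - N₁ y / N₂ y) • x + (N₁ y / N₂ y) • (x - y) := by module
  have hnum : |N₁ x * N₂ y - N₂ x * N₁ y| ≤ (a₁ * N₂ y + a₂ * N₁ y) * ‖x - y‖ := by
    have e : N₁ x * N₂ y - N₂ x * N₁ y = (N₁ x - N₁ y) * N₂ y + N₁ y * (N₂ y - N₂ x) := by
      ring
    rw [e]
    calc |(N₁ x - N₁ y) * N₂ y + N₁ y * (N₂ y - N₂ x)|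
        ≤ |(N₁ x - N₁ y)| * N₂ y + N₁ y * |(N₂ y - N₂ x)| := by
          refine (abs_add_le _ _).trans ?_
          rw [abs_mul, abs_mul, abs_of_pos hBy, abs_of_nonneg (h₁nn y)]
      _ ≤ (a₁ * ‖x - y‖) * N₂ y + N₁ y * (a₂ * ‖x - y‖) := by
          have hA : |N₂ y - N₂ x| ≤ a₂ * ‖x - y‖ := by
            rw [norm_sub_rev]; exact h₂lip y x
          have hB : |N₁ x - N₁ y| ≤ a₁ * ‖x - y‖ := h₁lip x y
          gcongr <;> first | exact hA | exact hB | exact h₁nn y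
      _ = (a₁ * N₂ y + a₂ * N₁ y) * ‖x - y‖ := by ring
  have t1 : |N₁ x / N₂ x - N₁ y / N₂ y| * ‖x‖ ≤ (a₁ * (b + a₂) / b ^ 2) * ‖x - y‖ := by
    rw [div_sub_div _ _ (ne_of_gt hBx) (ne_of_gt hBy), abs_div,
      abs_of_pos (mul_pos hBx hBy), div_mul_eq_mul_div, div_le_iff₀ (by positivity)]
    have h1 : b * ‖x‖ ≤ N₂ x := h₂lb x
    have h2 : N₁ y * b ≤ a₁ * N₂ y := by nlinarith [h₁ub y, h₂lb y]
    rw [div_mul_eq_mul_div, div_mul_eq_mul_div, le_div_iff₀ (by positivity)]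
    nlinarith [mul_le_mul_of_nonneg_right hnum (le_of_lt (mul_pos hb (mul_pos hb hBx))),
      mul_le_mul_of_nonneg_left h1 (mul_nonneg (abs_nonneg (N₁ x * N₂ y - N₂ x * N₁ y)) hb.le),
      mul_le_mul_of_nonneg_right h2 (mul_nonneg (mul_nonneg ha₂ hw) (le_of_lt hBx)),
      mul_pos hBx hBy, h₁nn y]
  have t2 : |N₁ y / N₂ y| * ‖x - y‖ ≤ (a₁ / b) * ‖x - y‖ := by
    gcongr
    rw [abs_of_nonneg (div_nonneg (h₁nn y) (le_of_lt hBy)), div_le_div_iff₀ hBy hb]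
    nlinarith [h₁ub y, h₂lb y]
  calc ‖(N₁ x / N₂ x) • x - (N₁ y / N₂ y) • y‖
      ≤ ‖(N₁ x / N₂ x - N₁ y / N₂ y) • x‖ + ‖(N₁ y / N₂ y) • (x - y)‖ := by
        rw [key]; exact norm_add_le _ _
    _ = |N₁ x / N₂ x - N₁ y / N₂ y| * ‖x‖ + |N₁ y / N₂ y| * ‖x - y‖ := by
        rw [norm_smul, norm_smul, Real.norm_eq_abs, Real.norm_eq_abs]
    _ ≤ (a₁ * (b + a₂) / b ^ 2) * ‖x - y‖ + (a₁ / b) * ‖x - y‖ := add_le_add t1 t2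
    _ = (a₁ * (2 * b + a₂) / b ^ 2) * ‖x - y‖ := by field_simp; ring

end Aux

theorem supNorm_rescaling_biLipschitz {d : ℕ} (hd : 1 ≤ d)
    (h : EuclideanSpace ℝ (Fin d) → EuclideanSpace ℝ (Fin d))
    (hh : ∀ x, x ≠ 0 → h x = (supNorm x / ‖x‖) • x) (h0 : h 0 = 0) :
    ∃ c C : ℝ, 0 < c ∧ c ≤ C ∧
      ∀ x y : EuclideanSpace ℝ (Fin d),
        c * ‖x - y‖ ≤ ‖h x - h y‖ ∧ ‖h x - h y‖ ≤ C * ‖x - y‖ := by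
  have hd1 : (1:ℝ) ≤ d := by exact_mod_cast hd
  have hsd : (1:ℝ) ≤ Real.sqrt d := by
    rw [show (1:ℝ) = Real.sqrt 1 from (Real.sqrt_one).symm]
    exact Real.sqrt_le_sqrt hd1
  set β : ℝ := (Real.sqrt d)⁻¹ with hβdef
  have hβ : 0 < β := by positivity
  have hβ1 : β ≤ 1 := by
    rw [hβdef]
    exact inv_le_one_of_one_le₀ hsd
  -- the lower norm bound for supNorm
  have hlb : ∀ x : EuclideanSpace ℝ (Fin d), β * ‖x‖ ≤ supNorm x := by
    intro x
    have := norm_le_sqrt_supNorm x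
    calc β * ‖x‖ ≤ β * (Real.sqrt d * supNorm x) := by
          gcongr
      _ = supNorm x := by
          rw [hβdef, ← mul_assoc, inv_mul_cancel₀ (by positivity), one_mul]
  -- upper Lipschitz bound for h on nonzero points
  have Hh : ∀ x y : EuclideanSpace ℝ (Fin d), x ≠ 0 → y ≠ 0 →
      ‖(supNorm x / ‖x‖) • x - (supNorm y / ‖y‖) • y‖ ≤ 3 * ‖x - y‖ := by
    intro x y hx hy
    have := aux_lip (E := EuclideanSpace ℝ (Fin d)) supNorm (fun z => ‖z‖) 1 1 1 one_pos zero_le_one zero_le_one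
      (fun x y => by
        rw [one_mul]
        exact (supNorm_sub_lip x y).trans (supNorm_le_norm _))
      (fun x => by rw [one_mul]; exact supNorm_le_norm x)
      (fun x => supNorm_nonneg x)
      (fun x y => by rw [one_mul]; exact abs_norm_sub_norm_le x y)
      (fun x => by rw [one_mul])
      x y hx hy
    calc ‖(supNorm x / ‖x‖) • x - (supNorm y / ‖y‖) • y‖
        ≤ (1 * (2 * 1 + 1) / 1 ^ 2) * ‖x - y‖ := this
      _ = 3 * ‖x - y‖ := by norm_num
  -- upper Lipschitz bound for the inverse map on nonzero points
  set Cg : ℝ := 1 * (2 * β + 1) / β ^ 2 with hCgdef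
  have hCgpos : 0 < Cg := by rw [hCgdef]; positivity
  have Hg : ∀ x y : EuclideanSpace ℝ (Fin d), x ≠ 0 → y ≠ 0 →
      ‖(‖x‖ / supNorm x) • x - (‖y‖ / supNorm y) • y‖ ≤ Cg * ‖x - y‖ := by
    intro x y hx hy
    exact aux_lip (E := EuclideanSpace ℝ (Fin d)) (fun z => ‖z‖) supNorm 1 1 β hβ zero_le_one zero_le_one
      (fun x y => by rw [one_mul]; exact abs_norm_sub_norm_le x y)
      (fun x => by rw [one_mul])
      (fun x => norm_nonneg x)
      (fun x y => by
        rw [one_mul]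
        exact (supNorm_sub_lip x y).trans (supNorm_le_norm _))
      hlb x y hx hy
  -- properties of h at nonzero points
  have hprops : ∀ x : EuclideanSpace ℝ (Fin d), x ≠ 0 →
      h x ≠ 0 ∧ ‖h x‖ = supNorm x ∧ (‖h x‖ / supNorm (h x)) • h x = x := by
    intro x hx
    have hxn : 0 < ‖x‖ := norm_pos_iff.2 hx
    have hs : 0 < supNorm x := supNorm_pos hx
    have ht : 0 < supNorm x / ‖x‖ := div_pos hs hxn
    have hne : h x ≠ 0 := by
      rw [hh x hx]; exact smul_ne_zero (ne_of_gt ht) hx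
    have hn : ‖h x‖ = supNorm x := by
      rw [hh x hx, norm_smul, Real.norm_eq_abs, abs_of_pos ht,
        div_mul_cancel₀ _ (ne_of_gt hxn)]
    have hsn : supNorm (h x) = (supNorm x / ‖x‖) * supNorm x := by
      rw [hh x hx, supNorm_smul, abs_of_pos ht]
    refine ⟨hne, hn, ?_⟩
    have hscal : supNorm x / (supNorm x / ‖x‖ * supNorm x) * (supNorm x / ‖x‖) = 1 := by
      field_simp
    rw [hn, hsn, hh x hx, smul_smul, hscal, one_smul]
  refine ⟨Cg⁻¹, 3, by positivity, ?_, ?_⟩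
  · -- Cg⁻¹ ≤ 3
    have h1 : (1:ℝ) ≤ Cg := by
      rw [hCgdef, le_div_iff₀ (by positivity)]
      nlinarith
    calc Cg⁻¹ ≤ 1 := inv_le_one_of_one_le₀ h1
      _ ≤ 3 := by norm_num
  intro x y
  rcases eq_or_ne x y with rfl | hxy
  · simp [hCgpos.le]
  have hciβ : Cg⁻¹ ≤ β := by
    rw [inv_eq_one_div, div_le_iff₀ hCgpos, hCgdef]
    rw [one_mul, mul_div_assoc', le_div_iff₀ (by positivity)]
    nlinarith
  rcases eq_or_ne x 0 with rfl | hx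
  · -- x = 0
    have hy : y ≠ 0 := fun e => hxy e.symm
    obtain ⟨hne, hn, -⟩ := hprops y hy
    have e1 : ‖h 0 - h y‖ = ‖h y‖ := by rw [h0, zero_sub, norm_neg]
    have e2 : ‖(0:EuclideanSpace ℝ (Fin d)) - y‖ = ‖y‖ := by rw [zero_sub, norm_neg]
    rw [e1, e2, hn]
    constructor
    · calc Cg⁻¹ * ‖y‖ ≤ β * ‖y‖ := by gcongr
        _ ≤ supNorm y := hlb y
    · calc supNorm y ≤ ‖y‖ := supNorm_le_norm y
        _ ≤ 3 * ‖y‖ := by nlinarith [norm_nonneg y]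
  rcases eq_or_ne y 0 with rfl | hy
  · obtain ⟨hne, hn, -⟩ := hprops x hx
    have e1 : ‖h x - h 0‖ = ‖h x‖ := by rw [h0, sub_zero]
    have e2 : ‖x - (0:EuclideanSpace ℝ (Fin d))‖ = ‖x‖ := by rw [sub_zero]
    rw [e1, e2, hn]
    constructor
    · calc Cg⁻¹ * ‖x‖ ≤ β * ‖x‖ := by gcongr
        _ ≤ supNorm x := hlb x
    · calc supNorm x ≤ ‖x‖ := supNorm_le_norm x
        _ ≤ 3 * ‖x‖ := by nlinarith [norm_nonneg x]
  -- both nonzero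
  obtain ⟨hnex, -, hgx⟩ := hprops x hx
  obtain ⟨hney, -, hgy⟩ := hprops y hy
  constructor
  · have := Hg (h x) (h y) hnex hney
    rw [hgx, hgy] at this
    calc Cg⁻¹ * ‖x - y‖ ≤ Cg⁻¹ * (Cg * ‖h x - h y‖) :=
          mul_le_mul_of_nonneg_left this (by positivity)
      _ = ‖h x - h y‖ := by
          rw [← mul_assoc, inv_mul_cancel₀ (ne_of_gt hCgpos), one_mul]
  · rw [hh x hx, hh y hy]
    exact Hh x y hx hy
end

section
/- Let X be a nonempty compact connected metric space equipped with a strict linear order ≺ whose order topology agrees with the metric topology. Then either X consists of a single point, or there is an order-preserving homeomorphism from X onto the unit interval [0,1]. -/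
open Set

theorem compact_connected_linear_order_arc
    (X : Type*) [MetricSpace X] [CompactSpace X] [ConnectedSpace X] [Nonempty X]
    (r : X → X → Prop) [IsStrictTotalOrder X r]
    (htop : TopologicalSpace.generateFrom
        {s : Set X | ∃ a : X, s = {w | r w a} ∨ s = {w | r a w}}
      = (inferInstance : TopologicalSpace X)) :
    (∃ x : X, ∀ y : X, y = x) ∨
      ∃ e : X ≃ₜ Set.Icc (0 : ℝ) 1, ∀ a b : X, r a b ↔ (e a : ℝ) < (e b : ℝ) := by
  classical
  letI : LinearOrder X := linearOrderOfSTO r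
  have hlt : ∀ a b : X, r a b ↔ a < b := fun a b => Iff.rfl
  haveI : OrderTopology X := by
    constructor
    rw [show (UniformSpace.toTopologicalSpace : TopologicalSpace X)
        = (inferInstance : TopologicalSpace X) from rfl, ← htop]
    congr 1
    ext s
    constructor
    · rintro ⟨a, rfl | rfl⟩
      exacts [⟨a, Or.inr rfl⟩, ⟨a, Or.inl rfl⟩]
    · rintro ⟨a, rfl | rfl⟩
      exacts [⟨a, Or.inr rfl⟩, ⟨a, Or.inl rfl⟩]
  rcases subsingleton_or_nontrivial X with hs | hnt
  · exact Or.inl ⟨Classical.arbitrary X, fun y => Subsingleton.elim _ _⟩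
  refine Or.inr ?_
  obtain ⟨m, -, hm⟩ := isCompact_univ.exists_isLeast (univ_nonempty (α := X))
  obtain ⟨M, -, hM⟩ := isCompact_univ.exists_isGreatest (univ_nonempty (α := X))
  have hmle : ∀ x : X, m ≤ x := fun x => hm (mem_univ x)
  have hleM : ∀ x : X, x ≤ M := fun x => hM (mem_univ x)
  have hmM : m < M := by
    rcases exists_pair_ne X with ⟨a, b, hab⟩
    rcases lt_or_gt_of_ne hab with h | h
    · exact lt_of_le_of_lt (hmle a) (lt_of_lt_of_le h (hleM b))
    · exact lt_of_le_of_lt (hmle b) (lt_of_lt_of_le h (hleM a))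
  -- densely ordered from connectedness
  haveI : DenselyOrdered X := by
    constructor
    intro a b hab
    by_contra h
    push_neg at h
    have hcover : (univ : Set X) ⊆ Iio b ∪ Ioi a := by
      intro x _
      rcases lt_or_ge x b with hx | hx
      · exact Or.inl hx
      · exact Or.inr (lt_of_lt_of_le hab hx)
    obtain ⟨x, -, hx1, hx2⟩ := isPreconnected_univ (Iio b) (Ioi a) isOpen_Iio isOpen_Ioi hcover
      ⟨a, mem_univ a, hab⟩ ⟨b, mem_univ b, hab⟩
    exact absurd hx1 (not_lt_of_ge (h x hx2))
  -- countable dense subset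
  obtain ⟨D, hDc, hDd⟩ := TopologicalSpace.exists_countable_dense X
  have hbtwn : ∀ a b : X, a < b → ∃ d ∈ D, d ∈ Ioo a b := by
    intro a b hab
    obtain ⟨d, hd, hd2⟩ := hDd.exists_mem_open isOpen_Ioo (nonempty_Ioo.2 hab)
    exact ⟨d, hd, hd2⟩
  set S : Set X := D ∩ Ioo m M with hS
  haveI : Countable S := (hDc.mono inter_subset_left).to_subtype
  have hSmem : ∀ a b : X, m ≤ a → b ≤ M → a < b → ∃ d : S, a < (d : X) ∧ (d : X) < b := by
    intro a b ham hbM hab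
    obtain ⟨d, hd, hd1, hd2⟩ := hbtwn a b hab
    exact ⟨⟨d, hd, lt_of_le_of_lt ham hd1, lt_of_lt_of_le hd2 hbM⟩, hd1, hd2⟩
  haveI : Nonempty S := by
    obtain ⟨d, _, _⟩ := hSmem m M le_rfl le_rfl hmM
    exact ⟨d⟩
  haveI : DenselyOrdered S := by
    constructor
    rintro ⟨a, ha⟩ ⟨b, hb⟩ hab
    obtain ⟨d, hd1, hd2⟩ :=
      hSmem a b (le_of_lt ha.2.1) (le_of_lt hb.2.2) (Subtype.mk_lt_mk.1 hab)
    exact ⟨d, Subtype.coe_lt_coe.1 hd1, Subtype.coe_lt_coe.1 hd2⟩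
  haveI : NoMinOrder S := by
    constructor
    rintro ⟨a, ha⟩
    obtain ⟨d, hd1, hd2⟩ := hSmem m a le_rfl (le_of_lt ha.2.2) ha.2.1
    exact ⟨d, Subtype.coe_lt_coe.1 hd2⟩
  haveI : NoMaxOrder S := by
    constructor
    rintro ⟨a, ha⟩
    obtain ⟨d, hd1, hd2⟩ := hSmem a M (le_of_lt ha.2.1) le_rfl ha.2.2
    exact ⟨d, Subtype.coe_lt_coe.1 hd1⟩
  -- order iso with rationals in (0,1)
  haveI : Nonempty (Ioo (0 : ℚ) 1) := ⟨⟨1/2, by norm_num⟩⟩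
  obtain ⟨g⟩ : Nonempty (S ≃o Ioo (0 : ℚ) 1) := Order.iso_of_countable_dense S (Ioo (0 : ℚ) 1)
  set gr : S → ℝ := fun d => ((g d : ℚ) : ℝ) with hgr
  have hgr0 : ∀ d : S, 0 < gr d := fun d =>
    show (0 : ℝ) < ((g d : ℚ) : ℝ) by exact_mod_cast (g d).2.1
  have hgr1 : ∀ d : S, gr d < 1 := fun d =>
    show ((g d : ℚ) : ℝ) < 1 by exact_mod_cast (g d).2.2
  have hgrmono : StrictMono gr := by
    intro a b hab
    have h1 : g a < g b := g.lt_iff_lt.2 hab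
    show ((g a : ℚ) : ℝ) < ((g b : ℚ) : ℝ)
    exact_mod_cast Subtype.coe_lt_coe.2 h1
  set f : X → ℝ := fun x => sSup (gr '' {d : S | (d : X) < x}) with hf
  have hbdd : ∀ x : X, BddAbove (gr '' {d : S | (d : X) < x}) := by
    intro x
    exact ⟨1, by rintro y ⟨d, -, rfl⟩; exact le_of_lt (hgr1 d)⟩
  have hf0 : ∀ x : X, 0 ≤ f x :=
    fun x => Real.sSup_nonneg (by rintro y ⟨d, -, rfl⟩; exact le_of_lt (hgr0 d))
  have hf1 : ∀ x : X, f x ≤ 1 :=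
    fun x => Real.sSup_le (by rintro y ⟨d, -, rfl⟩; exact le_of_lt (hgr1 d)) zero_le_one
  have hfle : ∀ (x : X) (d : S), (d : X) < x → gr d ≤ f x :=
    fun x d hd => le_csSup (hbdd x) ⟨d, hd, rfl⟩
  have hfub : ∀ (x : X) (c : ℝ), 0 ≤ c → (∀ d : S, (d : X) < x → gr d ≤ c) → f x ≤ c := by
    intro x c hc h
    exact Real.sSup_le (by rintro y ⟨d, hd, rfl⟩; exact h d hd) hc
  have hfmono : StrictMono f := by
    intro a b hab
    obtain ⟨d1, hd11, hd12⟩ := hSmem a b (hmle a) (hleM b) hab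
    obtain ⟨d2, hd21, hd22⟩ := hSmem (d1 : X) b (le_of_lt (lt_of_le_of_lt (hmle a) hd11))
      (hleM b) hd12
    have h1 : f a ≤ gr d1 := hfub a _ (le_of_lt (hgr0 d1))
      (fun d hd => le_of_lt (hgrmono (Subtype.coe_lt_coe.1 (lt_trans hd hd11))))
    have h2 : gr d1 < gr d2 := hgrmono (Subtype.coe_lt_coe.1 hd21)
    exact lt_of_le_of_lt h1 (lt_of_lt_of_le h2 (hfle b d2 hd22))
  -- f m = 0
  have hfm : f m = 0 := by
    have : {d : S | (d : X) < m} = ∅ := by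
      ext d; simp only [mem_setOf_eq, mem_empty_iff_false, iff_false, not_lt]
      exact hmle _
    rw [hf]; simp only [this, image_empty, Real.sSup_empty]
  -- surjectivity
  have hsurj : ∀ y : ℝ, 0 ≤ y → y ≤ 1 → ∃ x : X, f x = y := by
    intro y hy0 hy1
    rcases eq_or_lt_of_le hy0 with h0 | h0
    · exact ⟨m, by rw [hfm, h0]⟩
    -- y > 0
    set T : Set X := (fun d : S => (d : X)) '' {d : S | gr d < y} with hT
    have hTne : T.Nonempty := by
      obtain ⟨q, hq0, hqy⟩ := exists_rat_btwn h0
      have hq1 : q < 1 := by exact_mod_cast lt_of_lt_of_le hqy hy1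
      have hq0' : (0 : ℚ) < q := by exact_mod_cast hq0
      refine ⟨(g.symm ⟨q, hq0', hq1⟩ : S), ⟨g.symm ⟨q, hq0', hq1⟩, ?_, rfl⟩⟩
      simp only [mem_setOf_eq, hgr, g.apply_symm_apply]
      exact hqy
    obtain ⟨x, hx⟩ := ((isClosed_closure (s := T)).isCompact).exists_isGreatest hTne.closure
    have hlub : IsLUB T x :=
      ⟨fun t ht => hx.2 (subset_closure ht), fun b hb => (closure_minimal hb isClosed_Iic) hx.1⟩
    refine ⟨x, le_antisymm ?_ ?_⟩
    · refine hfub x y (le_of_lt h0) ?_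
      intro d hd
      by_contra hc
      push_neg at hc
      have hub : (d : X) ∈ upperBounds T := by
        rintro t ⟨e, he, rfl⟩
        exact le_of_lt (Subtype.coe_lt_coe.2 (hgrmono.lt_iff_lt.1 (lt_trans he hc)))
      exact absurd hd (not_lt_of_ge (hlub.2 hub))
    · by_contra hc
      push_neg at hc
      obtain ⟨q, hq1, hq2⟩ := exists_rat_btwn hc
      have hq0 : (0 : ℝ) < q := lt_of_le_of_lt (hf0 x) hq1
      obtain ⟨q2, hq21, hq22⟩ := exists_rat_btwn hq2
      have hq20 : (0 : ℚ) < q2 := by exact_mod_cast lt_trans hq0 hq21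
      have hq2lt1 : q2 < 1 := by exact_mod_cast lt_of_lt_of_le hq22 hy1
      have hq0' : (0 : ℚ) < q := by exact_mod_cast hq0
      have hqq2 : q < q2 := by exact_mod_cast hq21
      have hqlt1 : q < 1 := lt_trans hqq2 hq2lt1
      set d : S := g.symm ⟨q, hq0', hqlt1⟩ with hd
      set d2 : S := g.symm ⟨q2, hq20, hq2lt1⟩ with hd2
      have hgrd : gr d = (q : ℝ) := by simp [hgr, hd, g.apply_symm_apply]
      have hgrd2 : gr d2 = (q2 : ℝ) := by simp [hgr, hd2, g.apply_symm_apply]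
      have hdd2 : d < d2 := by
        rw [hd, hd2, g.symm.lt_iff_lt]
        exact Subtype.mk_lt_mk.2 (by exact_mod_cast hq21)
      have hd2T : (d2 : X) ∈ T := ⟨d2, by rw [mem_setOf_eq, hgrd2]; exact hq22, rfl⟩
      have : (d : X) < x := lt_of_lt_of_le (Subtype.coe_lt_coe.2 hdd2) (hlub.1 hd2T)
      have := hfle x d this
      rw [hgrd] at this
      exact absurd hq1 (not_lt_of_ge this)
  -- build the order iso
  set F : X → Icc (0 : ℝ) 1 := fun x => ⟨f x, hf0 x, hf1 x⟩ with hF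
  have hFmono : StrictMono F := fun a b hab => Subtype.mk_lt_mk.2 (hfmono hab)
  have hFsurj : Function.Surjective F := by
    rintro ⟨y, hy0, hy1⟩
    obtain ⟨x, hx⟩ := hsurj y hy0 hy1
    exact ⟨x, Subtype.ext hx⟩
  set e0 : X ≃o Icc (0 : ℝ) 1 := StrictMono.orderIsoOfSurjective F hFmono hFsurj with he0
  refine ⟨e0.toHomeomorph, ?_⟩
  intro a b
  rw [hlt a b]
  constructor
  · intro h
    exact Subtype.coe_lt_coe.2 (e0.lt_iff_lt.2 h)
  · intro h
    exact e0.lt_iff_lt.1 (Subtype.coe_lt_coe.1 h)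
end

section
/- Let Y ⊆ ℝ^d and ρ > 1. Suppose that for every y ∈ Y and every η > 0 there exist r(y) ∈ (0,1), d(y) ∈ (0,η) and N(y) ∈ ℕ with d(y)^ρ · N(y) ≤ r(y)^d, such that B(y, r(y)) ∩ Y can be covered by N(y) sets each of diameter at most d(y). Then the Hausdorff dimension of Y is at most ρ. -/
set_option maxHeartbeats 1000000
open Metric MeasureTheory ENNReal Filter Set Topology

lemma aux_measure_zero {d : ℕ} (Y : Set (EuclideanSpace ℝ (Fin d))) (ρ s : ℝ) (hρ : 1 < ρ)
    (hs : ρ < s)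
    (H : ∀ y ∈ Y, ∀ η : ℝ, 0 < η →
      ∃ r : ℝ, r ∈ Set.Ioo (0 : ℝ) 1 ∧ ∃ δ : ℝ, δ ∈ Set.Ioo (0 : ℝ) η ∧ ∃ N : ℕ,
        δ ^ ρ * N ≤ r ^ d ∧
        ∃ U : Fin N → Set (EuclideanSpace ℝ (Fin d)),
          (ball y r ∩ Y ⊆ ⋃ i, U i) ∧ ∀ i, EMetric.diam (U i) ≤ ENNReal.ofReal δ)
    (M : ℕ) : μH[s] (Y ∩ closedBall 0 M) = 0 := by
  classical
  have hη : ∀ n : ℕ, (0:ℝ) < ((n:ℝ)+1)⁻¹ := fun n => by positivity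
  choose r hr δ hδ N hN U hU hdiam using fun (n : ℕ) (y : Y) => H y y.2 ((n:ℝ)+1)⁻¹ (hη n)
  set V₁ := volume (ball (0:EuclideanSpace ℝ (Fin d)) 1) with hV₁def
  have hV₁0 : V₁ ≠ 0 := (measure_ball_pos _ _ one_pos).ne'
  have hV₁top : V₁ ≠ ∞ := measure_ball_lt_top.ne
  set C := ENNReal.ofReal (5^d) *
    (volume (closedBall (0:EuclideanSpace ℝ (Fin d)) (M+1)) / V₁) with hCdef
  have hCtop : C ≠ ∞ := by
    apply ENNReal.mul_ne_top ENNReal.ofReal_ne_top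
    exact (ENNReal.div_lt_top measure_closedBall_lt_top.ne hV₁0).ne
  have main : ∀ n : ℕ, ∃ u : Set Y, u.Countable ∧
      ((Y ∩ closedBall 0 (M:ℝ)) ⊆ ⋃ b ∈ u, ⋃ i, U n b i) ∧
      ∑' b : u, ENNReal.ofReal (r n b ^ d) ≤ C := by
    intro n
    obtain ⟨u, hu_sub, hu_disj, hu_cov⟩ :=
      Vitali.exists_disjoint_subfamily_covering_enlargement_closedBall
        {y : Y | (y : EuclideanSpace ℝ (Fin d)) ∈ closedBall 0 (M:ℝ)}
        (fun y : Y => (y : EuclideanSpace ℝ (Fin d))) (fun y => r n y / 5) 1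
        (fun a _ => by nlinarith [(hr n a).2, (hr n a).1]) 4 (by norm_num)
    have hucount : u.Countable := by
      apply hu_disj.countable_of_nonempty_interior
      intro b _
      exact (nonempty_ball.2 (by linarith [(hr n b).1])).mono ball_subset_interior_closedBall
    refine ⟨u, hucount, ?_, ?_⟩
    · rintro z ⟨hzY, hzM⟩
      obtain ⟨b, hb, hsub⟩ := hu_cov ⟨z, hzY⟩ hzM
      have hz : z ∈ ball (b : EuclideanSpace ℝ (Fin d)) (r n b) := by
        have h1 : z ∈ closedBall z (r n ⟨z, hzY⟩ / 5) :=
          mem_closedBall_self (by linarith [(hr n ⟨z, hzY⟩).1])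
        exact (closedBall_subset_ball (by nlinarith [(hr n b).1])) (hsub h1)
      exact Set.mem_biUnion hb (hU n b ⟨hz, hzY⟩)
    · have hvol : ∀ b : Y, volume (closedBall (b : EuclideanSpace ℝ (Fin d)) (r n b / 5))
          = ENNReal.ofReal ((r n b / 5) ^ d) * V₁ := by
        intro b
        rw [hV₁def, Measure.addHaar_closedBall volume _
          (by linarith [(hr n b).1] : (0:ℝ) ≤ r n b / 5)]
        simp [finrank_euclideanSpace_fin]
      have hsum : (∑' b : u, ENNReal.ofReal ((r n b / 5) ^ d)) * V₁
          ≤ volume (closedBall (0:EuclideanSpace ℝ (Fin d)) (M+1)) := by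
        rw [← ENNReal.tsum_mul_right, tsum_congr fun b : u => (hvol b).symm,
          ← measure_biUnion hucount hu_disj (fun b _ => measurableSet_closedBall)]
        refine measure_mono (Set.iUnion₂_subset fun b hb => ?_)
        apply closedBall_subset_closedBall'
        have hbM : dist (b : EuclideanSpace ℝ (Fin d)) 0 ≤ (M:ℝ) := hu_sub hb
        have h5 : r n b / 5 ≤ 1 := by nlinarith [(hr n b).2, (hr n b).1]
        linarith
      have hsum2 : (∑' b : u, ENNReal.ofReal ((r n b / 5) ^ d))
          ≤ volume (closedBall (0:EuclideanSpace ℝ (Fin d)) (M+1)) / V₁ :=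
        (ENNReal.le_div_iff_mul_le (Or.inl hV₁0) (Or.inl hV₁top)).2 hsum
      calc (∑' b : u, ENNReal.ofReal (r n b ^ d))
          = ∑' b : u, ENNReal.ofReal (5^d) * ENNReal.ofReal ((r n b / 5) ^ d) := by
            refine tsum_congr fun b => ?_
            rw [← ENNReal.ofReal_mul (by positivity)]
            congr 1
            rw [div_pow]
            field_simp
        _ = ENNReal.ofReal (5^d) * ∑' b : u, ENNReal.ofReal ((r n b / 5) ^ d) :=
            ENNReal.tsum_mul_left
        _ ≤ C := by rw [hCdef]; exact mul_le_mul_right hsum2 _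
  choose u hucnt hucov husum using main
  haveI : ∀ n : ℕ, Countable ((b : u n) × Fin (N n b)) := by
    intro n
    haveI := (hucnt n).to_subtype
    infer_instance
  have hle := Measure.hausdorffMeasure_le_liminf_tsum (X := EuclideanSpace ℝ (Fin d))
    (ι := fun n : ℕ => (b : ↥(u n)) × Fin (N n (b : Y)))
    s (Y ∩ closedBall 0 M) (l := (atTop : Filter ℕ))
    (fun n => ENNReal.ofReal (((n:ℝ)+1)⁻¹))
    (by
      rw [← ENNReal.ofReal_zero]
      apply ENNReal.tendsto_ofReal
      exact tendsto_one_div_add_atTop_nhds_zero_nat.congr fun n => by rw [one_div])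
    (fun n p => U n p.1 p.2)
    (Eventually.of_forall fun n p =>
      (hdiam n p.1 p.2).trans (ENNReal.ofReal_le_ofReal (hδ n p.1).2.le))
    (Eventually.of_forall fun n => by
      intro z hz
      obtain ⟨b, hb, hi⟩ := Set.mem_iUnion₂.1 (hucov n hz)
      obtain ⟨i, hi⟩ := Set.mem_iUnion.1 hi
      exact Set.mem_iUnion.2 ⟨⟨⟨b, hb⟩, i⟩, hi⟩)
  have hs0 : (0:ℝ) ≤ s := by linarith
  have hsρ : (0:ℝ) < s - ρ := by linarith
  have hbound : ∀ n : ℕ,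
      (∑' p : (b : u n) × Fin (N n (b:Y)), EMetric.diam (U n p.1 p.2) ^ s)
        ≤ ENNReal.ofReal ((((n:ℝ)+1)⁻¹) ^ (s - ρ)) * C := by
    intro n
    rw [ENNReal.tsum_sigma']
    calc (∑' (b : u n) (i : Fin (N n (b:Y))), EMetric.diam (U n b i) ^ s)
        ≤ ∑' b : u n, ENNReal.ofReal ((((n:ℝ)+1)⁻¹) ^ (s - ρ)) * ENNReal.ofReal (r n b ^ d) := by
          refine ENNReal.tsum_le_tsum fun b => ?_
          have hδ0 := (hδ n b).1
          have inner : (∑' i : Fin (N n (b:Y)), EMetric.diam (U n b i) ^ s)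
              ≤ (N n (b:Y) : ℝ≥0∞) * ENNReal.ofReal (δ n b ^ s) := by
            rw [tsum_fintype]
            have : ∀ i : Fin (N n (b:Y)), EMetric.diam (U n b i) ^ s
                ≤ ENNReal.ofReal (δ n b ^ s) := by
              intro i
              rw [← ENNReal.ofReal_rpow_of_pos hδ0]
              exact ENNReal.rpow_le_rpow (hdiam n b i) hs0
            calc (∑ i : Fin (N n (b:Y)), EMetric.diam (U n b i) ^ s)
                ≤ ∑ _i : Fin (N n (b:Y)), ENNReal.ofReal (δ n b ^ s) :=
                  Finset.sum_le_sum fun i _ => this i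
              _ = (N n (b:Y) : ℝ≥0∞) * ENNReal.ofReal (δ n b ^ s) := by
                  rw [Finset.sum_const, Finset.card_univ, Fintype.card_fin, nsmul_eq_mul]
          refine inner.trans ?_
          rw [← ENNReal.ofReal_natCast (N n (b:Y)), ← ENNReal.ofReal_mul (by positivity),
            ← ENNReal.ofReal_mul (by positivity)]
          apply ENNReal.ofReal_le_ofReal
          have h1 : δ n b ^ s = δ n b ^ (s - ρ) * δ n b ^ ρ := by
            rw [← Real.rpow_add hδ0]; ring_nf
          have h2 : δ n b ^ (s - ρ) ≤ (((n:ℝ)+1)⁻¹) ^ (s - ρ) :=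
            Real.rpow_le_rpow hδ0.le (hδ n b).2.le hsρ.le
          have h3 := hN n b
          have h4 : (0:ℝ) ≤ δ n b ^ ρ := Real.rpow_nonneg hδ0.le _
          have h5 : (0:ℝ) ≤ (N n (b:Y) : ℝ) := Nat.cast_nonneg _
          calc (N n (b:Y) : ℝ) * δ n b ^ s
              = δ n b ^ (s - ρ) * (δ n b ^ ρ * N n (b:Y)) := by rw [h1]; ring
            _ ≤ (((n:ℝ)+1)⁻¹) ^ (s - ρ) * (δ n b ^ ρ * N n (b:Y)) :=
                mul_le_mul_of_nonneg_right h2 (mul_nonneg h4 h5)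
            _ ≤ (((n:ℝ)+1)⁻¹) ^ (s - ρ) * r n b ^ d :=
                mul_le_mul_of_nonneg_left h3 (Real.rpow_nonneg (le_of_lt (hη n)) _)
      _ = ENNReal.ofReal ((((n:ℝ)+1)⁻¹) ^ (s - ρ)) * ∑' b : u n, ENNReal.ofReal (r n b ^ d) :=
          ENNReal.tsum_mul_left
      _ ≤ ENNReal.ofReal ((((n:ℝ)+1)⁻¹) ^ (s - ρ)) * C := mul_le_mul_right (husum n) _
  have hG : Tendsto (fun n : ℕ => ENNReal.ofReal ((((n:ℝ)+1)⁻¹) ^ (s - ρ)) * C) atTop (𝓝 0) := by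
    have h0 : Tendsto (fun n : ℕ => ((((n:ℝ)+1)⁻¹) ^ (s - ρ))) atTop (𝓝 0) := by
      have := (tendsto_rpow_neg_atTop hsρ).comp
        (tendsto_atTop_add_const_right atTop (1:ℝ) tendsto_natCast_atTop_atTop)
      refine this.congr fun n => ?_
      simp only [Function.comp]
      rw [Real.rpow_neg (by positivity), ← Real.inv_rpow (by positivity)]
    have h1 : Tendsto (fun n : ℕ => ENNReal.ofReal ((((n:ℝ)+1)⁻¹) ^ (s - ρ))) atTop (𝓝 0) := by
      rw [← ENNReal.ofReal_zero]
      exact ENNReal.tendsto_ofReal h0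
    have := ENNReal.Tendsto.mul_const h1 (Or.inr hCtop)
    simpa using this
  refine le_antisymm ?_ zero_le
  refine hle.trans ?_
  have : liminf (fun n : ℕ => ∑' p : (b : u n) × Fin (N n (b:Y)),
      EMetric.diam (U n p.1 p.2) ^ s) atTop
      ≤ liminf (fun n : ℕ => ENNReal.ofReal ((((n:ℝ)+1)⁻¹) ^ (s - ρ)) * C) atTop :=
    liminf_le_liminf (Eventually.of_forall hbound)
  rw [hG.liminf_eq] at this
  exact this

theorem dimH_le_of_covering {d : ℕ} (Y : Set (EuclideanSpace ℝ (Fin d))) (ρ : ℝ) (hρ : 1 < ρ)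
    (H : ∀ y ∈ Y, ∀ η : ℝ, 0 < η →
      ∃ r : ℝ, r ∈ Set.Ioo (0 : ℝ) 1 ∧ ∃ δ : ℝ, δ ∈ Set.Ioo (0 : ℝ) η ∧ ∃ N : ℕ,
        δ ^ ρ * N ≤ r ^ d ∧
        ∃ U : Fin N → Set (EuclideanSpace ℝ (Fin d)),
          (ball y r ∩ Y ⊆ ⋃ i, U i) ∧ ∀ i, EMetric.diam (U i) ≤ ENNReal.ofReal δ) :
    dimH Y ≤ ENNReal.ofReal ρ := by
  refine dimH_le fun s' hs' => ?_
  by_contra hlt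
  push_neg at hlt
  have hρ0 : (0:ℝ) ≤ ρ := by linarith
  have hρs : ρ < (s' : ℝ) := by
    have := hlt
    rw [← ENNReal.ofReal_coe_nnreal] at this
    exact (ENNReal.ofReal_lt_ofReal_iff_of_nonneg hρ0).1 this
  have hzero : μH[(s' : ℝ)] Y = 0 := by
    have hsub : Y ⊆ ⋃ M : ℕ, (Y ∩ closedBall 0 (M:ℝ)) := by
      intro y hy
      obtain ⟨M, hM⟩ := exists_nat_ge ‖y‖
      exact Set.mem_iUnion.2 ⟨M, hy, by simpa [mem_closedBall, dist_zero_right] using hM⟩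
    exact measure_mono_null hsub (measure_iUnion_null fun M =>
      aux_measure_zero Y ρ s' hρ hρs H M)
  rw [hzero] at hs'
  simp at hs'
end
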